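/- Let p be a prime, G = ℤ_p the cyclic group of order p, R a unital ring, θ : G → Aut(R) a group homomorphism into the ring automorphisms of R, and A = R_θ[G] the skew group ring. Let N be a right A-module, M a left A-module, and V a left ℤ[G]-module. Equip V ⊗_ℤ M with the semi-diagonal left A-action, and equip N ⊗_R M (where N and M are regarded as R-modules by restriction along R ⊆ A) with the left ℤ[G]-action g·(n ⊗ m) = (n·g^{−1}) ⊗ (g·m), where g acts on N and M through the unit elements 1·g ∈ A. Then the assignment n ⊗ (v ⊗ m) ↦ v ⊗ (n ⊗ m) defines a well-defined isomorphism of abelian groups N ⊗_A (V ⊗_ℤ M) ≅ V ⊗_{ℤ[G]} (N ⊗_R M), where in the target V is regarded as a right ℤ[G]-module via v·g = g^{−1}·v. -/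

import Mathlib

/-!
STATEMENT 13: Let `p` be a prime, `G = ℤ_p` the cyclic group of order `p`, `R` a unital
ring, `θ : G → Aut(R)` a group homomorphism into the ring automorphisms of `R`, and
`A = R_θ[G]` the skew group ring.  Let `N` be a right `A`-module, `M` a left `A`-module,
and `V` a left `ℤ[G]`-module.  Equip `V ⊗_ℤ M` with the semi-diagonal left `A`-action,
and equip `N ⊗_R M` (where `N` and `M` are regarded as `R`-modules by restriction along
`R ⊆ A`) with the left `ℤ[G]`-action `g·(n ⊗ m) = (n·g⁻¹) ⊗ (g·m)`, where `g` acts on `N`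
and `M` through the unit elements `1·g ∈ A`.  Then the assignment
`n ⊗ (v ⊗ m) ↦ v ⊗ (n ⊗ m)` defines a well-defined isomorphism of abelian groups
`N ⊗_A (V ⊗_ℤ M) ≅ V ⊗_{ℤ[G]} (N ⊗_R M)`, where in the target `V` is regarded as a right
`ℤ[G]`-module via `v·g = g⁻¹·v`.

The skew group ring is formalized as any ring `A` together with an additive isomorphism
`Φ : (⊕_{g ∈ G} R·g) ≃+ A` transporting the skew convolution product
`(r·g)(s·h) = (r·θ(g)(s))·(gh)` to the multiplication of `A` and `1_R·1_G` to `1`; the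
element `r·g ∈ A` is `Φ (Pi.single g r)`.  Right `A`-modules are left `Aᵐᵒᵖ`-modules.
The balanced tensor products `N ⊗_A -` and `V ⊗_{ℤ[G]} -` are realized as quotients of
the corresponding tensor products over `ℤ` by the subgroups generated by the balancing
relations.
-/

/-- The skew convolution product on `G → R` induced by `θ`. -/
def skewConv {R : Type*} [Ring R] {G : Type*} [Group G] [Fintype G]
    (θ : G →* RingAut R) (f f' : G → R) : G → R :=
  fun k => ∑ g : G, f g * θ g (f' (g⁻¹ * k))

/-- The element `1_R·1_G` of the skew group ring, in coordinates. -/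
def skewOne (R : Type*) [Ring R] (G : Type*) [Group G] [DecidableEq G] : G → R :=
  fun k => if k = 1 then 1 else 0

/-- Balancing relations for `N ⊗_A (V ⊗_ℤ M)`:  the subgroup of `N ⊗_ℤ (V ⊗_ℤ M)`
generated by `(n·a) ⊗ w - n ⊗ (a·w)`. -/
noncomputable def switchRelA (A : Type) [Ring A]
    (N : Type) [AddCommGroup N] [Module Aᵐᵒᵖ N]
    (M : Type) [AddCommGroup M] (V : Type) [AddCommGroup V]
    [Module A (TensorProduct ℤ V M)] :
    AddSubgroup (TensorProduct ℤ N (TensorProduct ℤ V M)) :=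
  AddSubgroup.closure
    {x | ∃ (a : A) (n : N) (w : TensorProduct ℤ V M),
      x = (MulOpposite.op a • n) ⊗ₜ[ℤ] w - n ⊗ₜ[ℤ] (a • w)}

/-- The balanced tensor product `N ⊗_A (V ⊗_ℤ M)`. -/
noncomputable def switchSrc (A : Type) [Ring A]
    (N : Type) [AddCommGroup N] [Module Aᵐᵒᵖ N]
    (M : Type) [AddCommGroup M] (V : Type) [AddCommGroup V]
    [Module A (TensorProduct ℤ V M)] :=
  TensorProduct ℤ N (TensorProduct ℤ V M) ⧸ switchRelA A N M V

noncomputable instance (A : Type) [Ring A]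
    (N : Type) [AddCommGroup N] [Module Aᵐᵒᵖ N]
    (M : Type) [AddCommGroup M] (V : Type) [AddCommGroup V]
    [Module A (TensorProduct ℤ V M)] : AddCommGroup (switchSrc A N M V) :=
  QuotientAddGroup.Quotient.addCommGroup _

/-- Balancing relations for `V ⊗_{ℤ[G]} (N ⊗_R M)`:  the subgroup of
`V ⊗_ℤ (N ⊗_ℤ M)` generated by the `R`-balancing relations of `N ⊗_R M` (with `R` acting
through `r ↦ r·1_G ∈ A`) together with the `ℤ[G]`-balancing relations
`(v·g) ⊗ z - v ⊗ (g·z)`, where `v·g = g⁻¹·v` and `g·(n ⊗ m) = (n·g⁻¹) ⊗ (g·m)` with `g`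
acting through `1·g ∈ A`. -/
noncomputable def switchRelG (R : Type) [Ring R]
    (G : Type) [Group G] [DecidableEq G]
    (A : Type) [Ring A] (Φ : (G → R) ≃+ A)
    (N : Type) [AddCommGroup N] [Module Aᵐᵒᵖ N]
    (M : Type) [AddCommGroup M] [Module A M]
    (V : Type) [AddCommGroup V] [Module (MonoidAlgebra ℤ G) V] :
    AddSubgroup (TensorProduct ℤ V (TensorProduct ℤ N M)) :=
  AddSubgroup.closure
    ({x | ∃ (r : R) (v : V) (n : N) (m : M),
        x = v ⊗ₜ[ℤ] ((MulOpposite.op (Φ (Pi.single (1 : G) r)) • n) ⊗ₜ[ℤ] m)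
          - v ⊗ₜ[ℤ] (n ⊗ₜ[ℤ] (Φ (Pi.single (1 : G) r) • m))} ∪
     {x | ∃ (g : G) (v : V) (n : N) (m : M),
        x = ((MonoidAlgebra.single g⁻¹ (1 : ℤ)) • v) ⊗ₜ[ℤ] (n ⊗ₜ[ℤ] m)
          - v ⊗ₜ[ℤ] ((MulOpposite.op (Φ (Pi.single g⁻¹ (1 : R))) • n) ⊗ₜ[ℤ]
              (Φ (Pi.single g (1 : R)) • m))})

/-- The balanced tensor product `V ⊗_{ℤ[G]} (N ⊗_R M)`. -/
noncomputable def switchTgt (R : Type) [Ring R]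
    (G : Type) [Group G] [DecidableEq G]
    (A : Type) [Ring A] (Φ : (G → R) ≃+ A)
    (N : Type) [AddCommGroup N] [Module Aᵐᵒᵖ N]
    (M : Type) [AddCommGroup M] [Module A M]
    (V : Type) [AddCommGroup V] [Module (MonoidAlgebra ℤ G) V] :=
  TensorProduct ℤ V (TensorProduct ℤ N M) ⧸ switchRelG R G A Φ N M V

noncomputable instance (R : Type) [Ring R]
    (G : Type) [Group G] [DecidableEq G]
    (A : Type) [Ring A] (Φ : (G → R) ≃+ A)
    (N : Type) [AddCommGroup N] [Module Aᵐᵒᵖ N]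
    (M : Type) [AddCommGroup M] [Module A M]
    (V : Type) [AddCommGroup V] [Module (MonoidAlgebra ℤ G) V] :
    AddCommGroup (switchTgt R G A Φ N M V) :=
  QuotientAddGroup.Quotient.addCommGroup _

/-- Helper: multiplication of "single" elements in the skew group ring coordinates. -/
theorem skewConv_single {R : Type} [Ring R] {G : Type} [Group G] [Fintype G] [DecidableEq G]
    (θ : G →* RingAut R) (g h : G) (r s : R) :
    skewConv θ (Pi.single g r) (Pi.single h s) = Pi.single (g * h) (r * θ g s) := by
  funext k
  unfold skewConv
  rw [Finset.sum_eq_single g]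
  · by_cases hk : k = g * h
    · subst hk; simp [Pi.single_apply]
    · have h1 : g⁻¹ * k ≠ h := by
        intro hc; apply hk; rw [← hc]; group
      simp [Pi.single_apply, h1, hk]
  · intro b _ hb
    simp [Pi.single_apply, hb]
  · simp

/-- Helper: equal in the quotient iff difference is in the subgroup. -/
theorem mk'_eq_of_sub_mem {α : Type} [AddCommGroup α] (s : AddSubgroup α) {a b : α}
    (h : a - b ∈ s) : QuotientAddGroup.mk' s a = QuotientAddGroup.mk' s b := by
  rw [QuotientAddGroup.mk'_eq_mk']
  refine ⟨b - a, ?_, by abel⟩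
  rw [← neg_sub a b]
  exact neg_mem h

/-- Generic version of the main theorem, for an arbitrary finite group. -/
theorem switch_tensor_iso_general
    (R : Type) [Ring R] (G : Type) [Group G] [Fintype G] [DecidableEq G]
    (θ : G →* RingAut R)
    (A : Type) [Ring A] (Φ : (G → R) ≃+ A)
    (hΦmul : ∀ f f', Φ f * Φ f' = Φ (skewConv θ f f'))
    (hΦone : Φ (skewOne R G) = 1)
    (N : Type) [AddCommGroup N] [Module Aᵐᵒᵖ N]
    (M : Type) [AddCommGroup M] [Module A M]
    (V : Type) [AddCommGroup V] [Module (MonoidAlgebra ℤ G) V]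
    [Module A (TensorProduct ℤ V M)]
    (hsemi : ∀ (r : R) (g : G) (v : V) (m : M),
      (Φ (Pi.single g r)) • (v ⊗ₜ[ℤ] m) =
        ((MonoidAlgebra.single g (1 : ℤ)) • v) ⊗ₜ[ℤ] ((Φ (Pi.single g r)) • m)) :
    ∃ φ : switchSrc A N M V →+ switchTgt R G A Φ N M V,
      (∀ (n : N) (v : V) (m : M),
        φ (QuotientAddGroup.mk' _ (n ⊗ₜ[ℤ] (v ⊗ₜ[ℤ] m))) =
          QuotientAddGroup.mk' _ (v ⊗ₜ[ℤ] (n ⊗ₜ[ℤ] m))) ∧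
      Function.Bijective φ := by
  classical
  set e : TensorProduct ℤ N (TensorProduct ℤ V M) ≃ₗ[ℤ]
      @TensorProduct ℤ _ V (TensorProduct ℤ N M) _ _ _ (AddCommGroup.toIntModule _) :=
    TensorProduct.leftComm ℤ N V M with he
  have eT : ∀ (n : N) (v : V) (m : M), e (n ⊗ₜ[ℤ] (v ⊗ₜ[ℤ] m)) = v ⊗ₜ[ℤ] (n ⊗ₜ[ℤ] m) :=
    fun _ _ _ => rfl
  have eS : ∀ (n : N) (v : V) (m : M), e.symm (v ⊗ₜ[ℤ] (n ⊗ₜ[ℤ] m)) = n ⊗ₜ[ℤ] (v ⊗ₜ[ℤ] m) :=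
    fun n v m => by rw [LinearEquiv.symm_apply_eq, eT]
  set mkA := QuotientAddGroup.mk' (switchRelA A N M V) with hmkA
  set mkG := QuotientAddGroup.mk' (switchRelG R G A Φ N M V) with hmkG
  -- algebraic identities in the skew group ring
  have mulΦ : ∀ (g h : G) (r s : R),
      Φ (Pi.single g r) * Φ (Pi.single h s) = Φ (Pi.single (g * h) (r * θ g s)) := by
    intro g h r s; rw [hΦmul, skewConv_single]
  have one1 : Φ (Pi.single (1 : G) (1 : R)) = 1 := by
    rw [← hΦone]; congr 1; funext k; simp [skewOne, Pi.single_apply]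
  have thetainv : ∀ (g : G) (r : R), θ g (θ g⁻¹ r) = r := by
    intro g r
    rw [show θ g (θ g⁻¹ r) = (θ g * θ g⁻¹) r from rfl, ← map_mul, mul_inv_cancel, map_one]
    rfl
  have uu : ∀ g : G, Φ (Pi.single g⁻¹ (1 : R)) * Φ (Pi.single g (1 : R)) = 1 := by
    intro g
    rw [mulΦ, inv_mul_cancel]
    simpa using one1
  -- the basic relation in the target, for pure tensors and "single" ring elements
  have baseT : ∀ (g : G) (r : R) (n : N) (v : V) (m : M),
      v ⊗ₜ[ℤ] ((MulOpposite.op (Φ (Pi.single g r)) • n) ⊗ₜ[ℤ] m)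
        - ((MonoidAlgebra.single g (1:ℤ)) • v) ⊗ₜ[ℤ] (n ⊗ₜ[ℤ] (Φ (Pi.single g r) • m))
        ∈ switchRelG R G A Φ N M V := by
    intro g r n v m
    have hX1 : ((MonoidAlgebra.single g (1:ℤ)) • v) ⊗ₜ[ℤ] (n ⊗ₜ[ℤ] (Φ (Pi.single g r) • m))
        - v ⊗ₜ[ℤ] ((MulOpposite.op (Φ (Pi.single g (1:R))) • n) ⊗ₜ[ℤ]
            (Φ (Pi.single g⁻¹ (1:R)) • (Φ (Pi.single g r) • m)))
        ∈ switchRelG R G A Φ N M V := by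
      refine AddSubgroup.subset_closure (Set.mem_union_right _
        ⟨g⁻¹, v, n, Φ (Pi.single g r) • m, ?_⟩)
      rw [inv_inv]
    have hX2 : v ⊗ₜ[ℤ] ((MulOpposite.op (Φ (Pi.single (1:G) (θ g⁻¹ r))) •
          (MulOpposite.op (Φ (Pi.single g (1:R))) • n)) ⊗ₜ[ℤ] m)
        - v ⊗ₜ[ℤ] ((MulOpposite.op (Φ (Pi.single g (1:R))) • n) ⊗ₜ[ℤ]
            (Φ (Pi.single (1:G) (θ g⁻¹ r)) • m))
        ∈ switchRelG R G A Φ N M V :=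
      AddSubgroup.subset_closure (Set.mem_union_left _
        ⟨θ g⁻¹ r, v, MulOpposite.op (Φ (Pi.single g (1:R))) • n, m, rfl⟩)
    have e1 : Φ (Pi.single g⁻¹ (1:R)) • (Φ (Pi.single g r) • m)
        = Φ (Pi.single (1:G) (θ g⁻¹ r)) • m := by
      rw [← mul_smul, mulΦ, inv_mul_cancel, one_mul]
    have e2 : MulOpposite.op (Φ (Pi.single (1:G) (θ g⁻¹ r))) •
          (MulOpposite.op (Φ (Pi.single g (1:R))) • n)
        = MulOpposite.op (Φ (Pi.single g r)) • n := by
      rw [← mul_smul, ← MulOpposite.op_mul, mulΦ, mul_one, one_mul, thetainv]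
    rw [e1] at hX1
    rw [e2] at hX2
    have h := sub_mem hX2 hX1
    convert h using 1
    abel
  -- the forward relation, in the quotient, for "single" ring elements
  have keyT1 : ∀ (g : G) (r : R) (n : N) (w : TensorProduct ℤ V M),
      mkG (e ((MulOpposite.op (Φ (Pi.single g r)) • n) ⊗ₜ[ℤ] w))
        = mkG (e (n ⊗ₜ[ℤ] (Φ (Pi.single g r) • w))) := by
    intro g r n w
    induction w using TensorProduct.induction_on with
    | zero => rw [TensorProduct.tmul_zero, smul_zero, TensorProduct.tmul_zero]
    | tmul v m =>
      rw [hsemi]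
      refine mk'_eq_of_sub_mem _ ?_
      simp only [he, TensorProduct.leftComm_tmul]
      exact baseT g r n v m
    | add w₁ w₂ h₁ h₂ =>
      rw [TensorProduct.tmul_add, smul_add, TensorProduct.tmul_add, map_add, map_add,
        map_add, map_add, h₁, h₂]
  -- the forward relation for arbitrary ring elements
  have keyT : ∀ (a : A) (n : N) (w : TensorProduct ℤ V M),
      mkG (e ((MulOpposite.op a • n) ⊗ₜ[ℤ] w)) = mkG (e (n ⊗ₜ[ℤ] (a • w))) := by
    have main : ∀ (s : Finset G) (f : G → R) (n : N) (w : TensorProduct ℤ V M),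
        mkG (e ((MulOpposite.op (∑ g ∈ s, Φ (Pi.single g (f g))) • n) ⊗ₜ[ℤ] w))
          = mkG (e (n ⊗ₜ[ℤ] ((∑ g ∈ s, Φ (Pi.single g (f g))) • w))) := by
      intro s f n w
      induction s using Finset.induction_on with
      | empty => simp
      | @insert g s hg ih =>
        rw [Finset.sum_insert hg, MulOpposite.op_add, add_smul, add_smul,
          TensorProduct.add_tmul, TensorProduct.tmul_add, map_add, map_add,
          map_add, map_add, keyT1, ih]
    intro a n w
    have ha : a = ∑ g : G, Φ (Pi.single g (Φ.symm a g)) := by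
      rw [← map_sum, Finset.univ_sum_single, Φ.apply_symm_apply]
    rw [ha]
    exact main Finset.univ (Φ.symm a) n w
  -- the backward relations
  have keyS1 : ∀ (r : R) (v : V) (n : N) (m : M),
      mkA (e.symm (v ⊗ₜ[ℤ] ((MulOpposite.op (Φ (Pi.single (1:G) r)) • n) ⊗ₜ[ℤ] m)))
        = mkA (e.symm (v ⊗ₜ[ℤ] (n ⊗ₜ[ℤ] (Φ (Pi.single (1:G) r) • m)))) := by
    intro r v n m
    refine mk'_eq_of_sub_mem _ ?_
    simp only [eS]
    refine AddSubgroup.subset_closure ⟨Φ (Pi.single (1:G) r), n, v ⊗ₜ[ℤ] m, ?_⟩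
    rw [hsemi]
    rw [show MonoidAlgebra.single (1:G) (1:ℤ) = (1 : MonoidAlgebra ℤ G) from rfl, one_smul]
  have keyS2 : ∀ (g : G) (v : V) (n : N) (m : M),
      mkA (e.symm (((MonoidAlgebra.single g⁻¹ (1:ℤ)) • v) ⊗ₜ[ℤ] (n ⊗ₜ[ℤ] m)))
        = mkA (e.symm (v ⊗ₜ[ℤ] ((MulOpposite.op (Φ (Pi.single g⁻¹ (1:R))) • n) ⊗ₜ[ℤ]
            (Φ (Pi.single g (1:R)) • m)))) := by
    intro g v n m
    refine mk'_eq_of_sub_mem _ ?_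
    simp only [eS]
    have hgen : (MulOpposite.op (Φ (Pi.single g⁻¹ (1:R))) • n) ⊗ₜ[ℤ]
          (v ⊗ₜ[ℤ] (Φ (Pi.single g (1:R)) • m))
        - n ⊗ₜ[ℤ] (Φ (Pi.single g⁻¹ (1:R)) • (v ⊗ₜ[ℤ] (Φ (Pi.single g (1:R)) • m)))
        ∈ switchRelA A N M V :=
      AddSubgroup.subset_closure
        ⟨Φ (Pi.single g⁻¹ (1:R)), n, v ⊗ₜ[ℤ] (Φ (Pi.single g (1:R)) • m), rfl⟩
    rw [hsemi, ← mul_smul, uu, one_smul] at hgen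
    have h := neg_mem hgen
    convert h using 1
    abel
  -- assemble the forward map
  have hφcond : ∀ x ∈ switchRelA A N M V,
      mkG.comp e.toLinearMap.toAddMonoidHom x = 0 := by
    intro x hx
    refine AddSubgroup.closure_induction ?_ (by simp) (fun y z _ _ hy hz => by
        simp only [map_add, hy, hz, add_zero]) (fun y _ hy => by
        simp only [map_neg, hy, neg_zero]) hx
    rintro y ⟨a, n, w, rfl⟩
    simp only [AddMonoidHom.comp_apply, LinearMap.toAddMonoidHom_coe,
      LinearEquiv.coe_coe, map_sub]
    rw [sub_eq_zero]
    exact keyT a n w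
  have hψcond : ∀ x ∈ switchRelG R G A Φ N M V,
      mkA.comp e.symm.toLinearMap.toAddMonoidHom x = 0 := by
    intro x hx
    refine AddSubgroup.closure_induction ?_ (by simp) (fun y z _ _ hy hz => by
        simp only [map_add, hy, hz, add_zero]) (fun y _ hy => by
        simp only [map_neg, hy, neg_zero]) hx
    rintro y (⟨r, v, n, m, rfl⟩ | ⟨g, v, n, m, rfl⟩) <;>
      simp only [AddMonoidHom.comp_apply, LinearMap.toAddMonoidHom_coe,
        LinearEquiv.coe_coe, map_sub] <;>
      rw [sub_eq_zero]
    · exact keyS1 r v n m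
    · exact keyS2 g v n m
  let φ : switchSrc A N M V →+ switchTgt R G A Φ N M V :=
    QuotientAddGroup.lift (switchRelA A N M V) (mkG.comp e.toLinearMap.toAddMonoidHom) hφcond
  let ψ : switchTgt R G A Φ N M V →+ switchSrc A N M V :=
    QuotientAddGroup.lift (switchRelG R G A Φ N M V)
      (mkA.comp e.symm.toLinearMap.toAddMonoidHom) hψcond
  have hφ : ∀ x, φ (mkA x) = mkG (e x) := fun x =>
    QuotientAddGroup.lift_mk' (switchRelA A N M V) hφcond x
  have hψ : ∀ x, ψ (mkG x) = mkA (e.symm x) := fun x =>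
    QuotientAddGroup.lift_mk' (switchRelG R G A Φ N M V) hψcond x
  have hli : Function.LeftInverse ψ φ := by
    intro x
    induction x using QuotientAddGroup.induction_on with
    | H z =>
      rw [show (QuotientAddGroup.mk z : switchSrc A N M V) = mkA z from rfl, hφ, hψ,
        LinearEquiv.symm_apply_apply]
  have hri : Function.RightInverse ψ φ := by
    intro x
    induction x using QuotientAddGroup.induction_on with
    | H z =>
      rw [show (QuotientAddGroup.mk z : switchTgt R G A Φ N M V) = mkG z from rfl, hψ, hφ,
        LinearEquiv.apply_symm_apply]
  refine ⟨φ, fun n v m => ?_, hli.injective, hri.surjective⟩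
  rw [hφ]
  simp only [eT]
  rfl

theorem switch_tensor_iso
    (p : ℕ) (hp : p.Prime) [NeZero p]
    (R : Type) [Ring R] (θ : Multiplicative (ZMod p) →* RingAut R)
    -- `A` is the skew group ring `R_θ[ℤ_p]`:
    (A : Type) [Ring A] (Φ : (Multiplicative (ZMod p) → R) ≃+ A)
    (hΦmul : ∀ f f', Φ f * Φ f' = Φ (skewConv θ f f'))
    (hΦone : Φ (skewOne R (Multiplicative (ZMod p))) = 1)
    -- `N` is a right `A`-module, `M` a left `A`-module, `V` a left `ℤ[G]`-module:
    (N : Type) [AddCommGroup N] [Module Aᵐᵒᵖ N]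
    (M : Type) [AddCommGroup M] [Module A M]
    (V : Type) [AddCommGroup V] [Module (MonoidAlgebra ℤ (Multiplicative (ZMod p))) V]
    -- `V ⊗_ℤ M` carries the semi-diagonal left `A`-action:
    [Module A (TensorProduct ℤ V M)]
    (hsemi : ∀ (r : R) (g : Multiplicative (ZMod p)) (v : V) (m : M),
      (Φ (Pi.single g r)) • (v ⊗ₜ[ℤ] m) =
        ((MonoidAlgebra.single g (1 : ℤ)) • v) ⊗ₜ[ℤ] ((Φ (Pi.single g r)) • m)) :
    -- `n ⊗ (v ⊗ m) ↦ v ⊗ (n ⊗ m)` is a well-defined isomorphism of abelian groups: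
    ∃ φ : switchSrc A N M V →+ switchTgt R (Multiplicative (ZMod p)) A Φ N M V,
      (∀ (n : N) (v : V) (m : M),
        φ (QuotientAddGroup.mk' _ (n ⊗ₜ[ℤ] (v ⊗ₜ[ℤ] m))) =
          QuotientAddGroup.mk' _ (v ⊗ₜ[ℤ] (n ⊗ₜ[ℤ] m))) ∧
      Function.Bijective φ :=
  switch_tensor_iso_general R (Multiplicative (ZMod p)) θ A Φ hΦmul hΦone N M V hsemi
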